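/- Let C be the set of Borel probability measures Q on [0,∞) satisfying ∫ x dQ(x) ≤ 1. If Q is an extreme point of the convex set C, then either Q is a Dirac measure δ_x for some x ∈ [0,1], or there exist two distinct points a, b ∈ [0,∞) such that Q({a,b}) = 1 and ∫ x dQ(x) = 1. -/

import Mathlib

open MeasureTheory Filter Set
open scoped ENNReal


lemma zeroOne_dirac (P : Measure ℝ) [IsProbabilityMeasure P]
    (h : ∀ s : Set ℝ, MeasurableSet s → P s = 0 ∨ P s = 1) :
    ∃ x : ℝ, P = Measure.dirac x := by
  set S : Set ℝ := {t : ℝ | P (Iic t) = 1} with hS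
  -- S is nonempty
  have hne : S.Nonempty := by
    have := tendsto_measure_Iic_atTop P
    rw [measure_univ] at this
    have h2 : ∀ᶠ t : ℝ in atTop, P (Iic t) > 1/2 := by
      refine this.eventually ?_
      exact eventually_gt_nhds (by norm_num)
    obtain ⟨t, ht⟩ := h2.exists
    refine ⟨t, ?_⟩
    rcases h (Iic t) measurableSet_Iic with h0 | h1
    · rw [h0] at ht; exact absurd ht (by norm_num)
    · exact h1
  -- S is bounded below
  have hbdd : BddBelow S := by
    have := tendsto_measure_Ici_atBot P
    rw [measure_univ] at this
    have h2 : ∀ᶠ t : ℝ in atBot, P (Ici t) > 1/2 := by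
      refine this.eventually ?_
      exact eventually_gt_nhds (by norm_num)
    obtain ⟨t₀, ht₀⟩ := h2.exists
    refine ⟨t₀, fun t ht => ?_⟩
    by_contra hlt
    push_neg at hlt
    have hsub : Iic t ⊆ Iio t₀ := fun y hy => lt_of_le_of_lt hy hlt
    have : P (Iic t) ≤ P (Iio t₀) := measure_mono hsub
    rw [ht] at this
    have hcompl : P (Iio t₀) + P (Ici t₀) ≤ 1 := by
      rw [← measure_univ (μ := P)]
      rw [← measure_union (by exact Iio_disjoint_Ici le_rfl) measurableSet_Ici,
        Iio_union_Ici]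
    have hle : (1 : ℝ≥0∞) + P (Ici t₀) ≤ 1 := le_trans (add_le_add this le_rfl) hcompl
    have hP : P (Ici t₀) = 0 := by
      have h1 : (1:ℝ≥0∞) + P (Ici t₀) ≤ 1 + 0 := by simpa using hle
      exact le_antisymm ((ENNReal.add_le_add_iff_left (by simp : (1:ℝ≥0∞) ≠ ⊤)).mp h1) (zero_le)
    rw [hP] at ht₀
    exact absurd ht₀ (by norm_num)
  set x := sInf S with hx
  have claim1 : ∀ t, x < t → P (Iic t) = 1 := by
    intro t ht
    obtain ⟨s, hsS, hst⟩ := exists_lt_of_csInf_lt hne ht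
    have : P (Iic s) ≤ P (Iic t) := measure_mono (Iic_subset_Iic.mpr hst.le)
    rw [hsS] at this
    exact le_antisymm prob_le_one this
  have claim2 : ∀ t, t < x → P (Iic t) = 0 := by
    intro t ht
    rcases h (Iic t) measurableSet_Iic with h0 | h1
    · exact h0
    · exact absurd (csInf_le hbdd h1) (not_le.mpr ht)
  -- P (Iio x) = 0
  have hIio : P (Iio x) = 0 := by
    have hcover : Iio x ⊆ ⋃ n : ℕ, Iic (x - (1 / (n + 1))) := by
      intro t ht
      obtain ⟨n, hn⟩ := exists_nat_gt (1 / (x - t))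
      have hxt : 0 < x - t := by linarith [ht.out]
      refine mem_iUnion.mpr ⟨n, ?_⟩
      simp only [mem_Iic]
      have hn1 : 1 / (x - t) < n + 1 := by linarith
      have : 1 / ((n : ℝ) + 1) < x - t := by
        rw [div_lt_iff₀ (by positivity)]
        rw [div_lt_iff₀ hxt] at hn1
        linarith
      linarith
    refine measure_mono_null hcover (measure_iUnion_null fun n => ?_)
    exact claim2 _ (sub_lt_self x (by positivity))
  -- P (Ioi x) = 0
  have hIoi : P (Ioi x) = 0 := by
    have hcover : Ioi x ⊆ ⋃ n : ℕ, Ici (x + (1 / (n + 1))) := by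
      intro t ht
      obtain ⟨n, hn⟩ := exists_nat_gt (1 / (t - x))
      have hxt : 0 < t - x := by linarith [ht.out]
      refine mem_iUnion.mpr ⟨n, ?_⟩
      simp only [mem_Ici]
      have hn1 : 1 / (t - x) < n + 1 := by linarith
      have : 1 / ((n : ℝ) + 1) < t - x := by
        rw [div_lt_iff₀ (by positivity)]
        rw [div_lt_iff₀ hxt] at hn1
        linarith
      linarith
    refine measure_mono_null hcover (measure_iUnion_null fun n => ?_)
    · 
      have h1 : P (Iic (x + 1 / (n + 2))) = 1 :=
        claim1 _ (lt_add_of_pos_right x (by positivity))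
      have hsub : Iic (x + 1 / (n + 2)) ⊆ Iio (x + 1 / (n + 1)) := by
        intro y hy
        have hy' := mem_Iic.mp hy
        have hlt : (1:ℝ)/(n+2) < 1/(n+1) := by
          apply div_lt_div_of_pos_left <;> [norm_num; positivity; norm_num]
        exact mem_Iio.mpr (by linarith)
      have hIio1 : P (Iio (x + 1 / (n + 1))) = 1 :=
        le_antisymm prob_le_one (h1 ▸ measure_mono hsub)
      have := measure_add_measure_compl (μ := P) (measurableSet_Iio (a := x + 1/(n+1)))
      rw [hIio1, measure_univ, compl_Iio] at this
      have h2 : (1:ℝ≥0∞) ≠ ⊤ := by simp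
      calc P (Ici (x + 1/(n+1))) = 1 + P (Ici (x + 1/(n+1))) - 1 := by
            rw [ENNReal.add_sub_cancel_left h2]
        _ = 1 - 1 := by rw [this]
        _ = 0 := by simp
  -- P {x} = 1
  have hsing : P {x} = 1 := by
    have hcompl : ({x}ᶜ : Set ℝ) = Iio x ∪ Ioi x := by
      ext y; simp only [mem_compl_iff, mem_singleton_iff, mem_union, mem_Iio, mem_Ioi]; exact ne_iff_lt_or_gt
    have h0 : P ({x}ᶜ) = 0 := by
      rw [hcompl]
      exact le_antisymm (le_trans (measure_union_le _ _) (by rw [hIio, hIoi]; simp)) (zero_le)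
    have := measure_add_measure_compl (μ := P) (measurableSet_singleton x)
    rw [h0, measure_univ, add_zero] at this
    exact this
  have hc0 : P ({x}ᶜ) = 0 := by
    have hcompl : ({x}ᶜ : Set ℝ) = Iio x ∪ Ioi x := by
      ext y; simp only [mem_compl_iff, mem_singleton_iff, mem_union, mem_Iio, mem_Ioi]; exact ne_iff_lt_or_gt
    rw [hcompl]
    exact le_antisymm (le_trans (measure_union_le _ _) (by rw [hIio, hIoi]; simp)) (zero_le)
  refine ⟨x, ?_⟩
  ext s hs
  rw [Measure.dirac_apply' _ hs]
  by_cases hxs : x ∈ s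
  · have : P (s ∩ {x}) + P (s \ {x}) = P s := measure_inter_add_diff s (measurableSet_singleton x)
    have h1 : s ∩ {x} = {x} := inter_eq_self_of_subset_right (singleton_subset_iff.mpr hxs)
    have h2 : P (s \ {x}) = 0 := measure_mono_null (diff_subset_compl s {x}) hc0
    rw [h1, h2, add_zero] at this
    rw [← this, hsing]
    simp [hxs]
  · have : P s ≤ P ({x}ᶜ) := measure_mono (fun y hy => by
      simp only [mem_compl_iff, mem_singleton_iff]
      rintro rfl; exact hxs hy)
    have h0 : P ({x}ᶜ) = 0 := by
      have hcompl : ({x}ᶜ : Set ℝ) = Iio x ∪ Ioi x := by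
        ext y; simp only [mem_compl_iff, mem_singleton_iff, mem_union, mem_Iio, mem_Ioi]; exact ne_iff_lt_or_gt
      rw [hcompl]
      exact le_antisymm (le_trans (measure_union_le _ _) (by rw [hIio, hIoi]; simp)) (zero_le)
    rw [h0] at this
    simp [le_antisymm this (zero_le), hxs]


lemma twoSet (Q : Measure ℝ) [IsProbabilityMeasure Q] (hQpos : Q (Set.Iio 0) = 0)
    (hm : ∫⁻ x, ENNReal.ofReal x ∂Q < 1)
    (hext : ∀ (Q₀ Q₁ : Measure ℝ), IsProbabilityMeasure Q₀ → IsProbabilityMeasure Q₁ →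
      Q₀ (Set.Iio 0) = 0 → Q₁ (Set.Iio 0) = 0 →
      (∫⁻ x, ENNReal.ofReal x ∂Q₀) ≤ 1 → (∫⁻ x, ENNReal.ofReal x ∂Q₁) ≤ 1 →
      ∀ α : ℝ, 0 < α → α < 1 →
        Q = ENNReal.ofReal (1 - α) • Q₀ + ENNReal.ofReal α • Q₁ → Q₀ = Q₁)
    (A : Set ℝ) (hA : MeasurableSet A) : Q A = 0 ∨ Q A = 1 := by
  by_contra hcon
  push_neg at hcon
  obtain ⟨h0, h1⟩ := hcon
  set RA := Q.restrict A with hRA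
  set RB := Q.restrict Aᶜ with hRB
  have hsum : RA + RB = Q := Measure.restrict_add_restrict_compl hA
  set a := (Q A).toReal with ha_def
  set b := (Q Aᶜ).toReal with hb_def
  have hQAne : Q A ≠ ⊤ := measure_ne_top Q A
  have hQBne : Q Aᶜ ≠ ⊤ := measure_ne_top Q Aᶜ
  have ha : 0 < a := ENNReal.toReal_pos h0 hQAne
  have hQAc : Q Aᶜ = 1 - Q A := prob_compl_eq_one_sub hA
  have hQAcne : Q Aᶜ ≠ 0 := by
    rw [hQAc]
    intro hz
    exact h1 (le_antisymm prob_le_one (by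
      have := tsub_eq_zero_iff_le.mp hz; exact this))
  have hb : 0 < b := ENNReal.toReal_pos hQAcne hQBne
  have hab : a + b = 1 := by
    have h := measure_add_measure_compl (μ := Q) hA
    rw [measure_univ] at h
    have := congrArg ENNReal.toReal h
    rw [ENNReal.toReal_add hQAne hQBne] at this
    simpa using this
  set IA := ∫⁻ x, ENNReal.ofReal x ∂ RA with hIA_def
  set IB := ∫⁻ x, ENNReal.ofReal x ∂ RB with hIB_def
  have hIAB : IA + IB = ∫⁻ x, ENNReal.ofReal x ∂Q := by
    rw [← hsum, lintegral_add_measure]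
  have hIABlt : IA + IB < 1 := hIAB ▸ hm
  have hIAne : IA ≠ ⊤ := fun h => by simp [h] at hIABlt
  have hIBne : IB ≠ ⊤ := fun h => by simp [h] at hIABlt
  set iA := IA.toReal with hiA_def
  set iB := IB.toReal with hiB_def
  have hiA0 : 0 ≤ iA := ENNReal.toReal_nonneg
  have hiB0 : 0 ≤ iB := ENNReal.toReal_nonneg
  have hiAB : iA + iB < 1 := by
    have := ENNReal.toReal_strict_mono (by simp) hIABlt
    rwa [ENNReal.toReal_add hIAne hIBne, ENNReal.toReal_one] at this
  have hIAv : IA = ENNReal.ofReal iA := (ENNReal.ofReal_toReal hIAne).symm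
  have hIBv : IB = ENNReal.ofReal iB := (ENNReal.ofReal_toReal hIBne).symm
  have hQAv : Q A = ENNReal.ofReal a := (ENNReal.ofReal_toReal hQAne).symm
  have hQBv : Q Aᶜ = ENNReal.ofReal b := (ENNReal.ofReal_toReal hQBne).symm
  have hD : (0:ℝ) < iA / a + iB / b + 1 := by positivity
  set ε := min (min a b / 2) ((1 - (iA + iB)) / (iA / a + iB / b + 1)) with hε_def
  have hε : 0 < ε := lt_min (by positivity) (div_pos (by linarith) hD)
  have hεa : ε < a := by
    have h1' := min_le_left (min a b / 2) ((1 - (iA + iB)) / (iA / a + iB / b + 1))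
    have h2' := min_le_left a b
    have h3' := min_le_right a b
    linarith
  have hεb : ε < b := by
    have h1' := min_le_left (min a b / 2) ((1 - (iA + iB)) / (iA / a + iB / b + 1))
    have h2' := min_le_left a b
    have h3' := min_le_right a b
    linarith
  have hεD : ε * (iA / a) + ε * (iB / b) + ε ≤ 1 - (iA + iB) := by
    have h2' : ε ≤ (1 - (iA + iB)) / (iA / a + iB / b + 1) := min_le_right _ _
    have h3' := mul_le_mul_of_nonneg_right h2' hD.le
    rw [div_mul_cancel₀ _ hD.ne'] at h3'
    calc ε * (iA / a) + ε * (iB / b) + ε = ε * (iA / a + iB / b + 1) := by ring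
      _ ≤ 1 - (iA + iB) := h3'
  have hnn0A : (0:ℝ) ≤ 1 + ε / a := by positivity
  have hnn0B : (0:ℝ) ≤ 1 - ε / b := by
    have : ε / b < 1 := (div_lt_one hb).mpr hεb
    linarith
  have hnn1A : (0:ℝ) ≤ 1 - ε / a := by
    have : ε / a < 1 := (div_lt_one ha).mpr hεa
    linarith
  have hnn1B : (0:ℝ) ≤ 1 + ε / b := by positivity
  have hm0 : (1 + ε / a) * iA + (1 - ε / b) * iB ≤ 1 := by
    have k1 : 0 ≤ ε * (iA / a) := by positivity
    have k2 : 0 ≤ ε * (iB / b) := by positivity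
    have expand : (1 + ε / a) * iA + (1 - ε / b) * iB
        = iA + iB + ε * (iA / a) - ε * (iB / b) := by ring
    rw [expand]; linarith
  have hm1 : (1 - ε / a) * iA + (1 + ε / b) * iB ≤ 1 := by
    have k1 : 0 ≤ ε * (iA / a) := by positivity
    have k2 : 0 ≤ ε * (iB / b) := by positivity
    have expand : (1 - ε / a) * iA + (1 + ε / b) * iB
        = iA + iB - ε * (iA / a) + ε * (iB / b) := by ring
    rw [expand]; linarith
  set Q₀ : Measure ℝ := ENNReal.ofReal (1 + ε/a) • RA + ENNReal.ofReal (1 - ε/b) • RB with hQ₀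
  set Q₁ : Measure ℝ := ENNReal.ofReal (1 - ε/a) • RA + ENNReal.ofReal (1 + ε/b) • RB with hQ₁
  have hRAuniv : RA univ = ENNReal.ofReal a := by
    rw [hRA, Measure.restrict_apply_univ]; exact hQAv
  have hRBuniv : RB univ = ENNReal.ofReal b := by
    rw [hRB, Measure.restrict_apply_univ]; exact hQBv
  have huniv : ∀ c d : ℝ, 0 ≤ c → 0 ≤ d → c * a + d * b = 1 →
      (ENNReal.ofReal c • RA + ENNReal.ofReal d • RB) univ = 1 := by
    intro c d hc hd hcd
    rw [Measure.add_apply, Measure.smul_apply, Measure.smul_apply, smul_eq_mul, smul_eq_mul,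
      hRAuniv, hRBuniv, ← ENNReal.ofReal_mul hc, ← ENNReal.ofReal_mul hd,
      ← ENNReal.ofReal_add (by positivity) (by positivity), hcd, ENNReal.ofReal_one]
  have hmean : ∀ c d : ℝ, 0 ≤ c → 0 ≤ d → c * iA + d * iB ≤ 1 →
      (∫⁻ x, ENNReal.ofReal x ∂(ENNReal.ofReal c • RA + ENNReal.ofReal d • RB)) ≤ 1 := by
    intro c d hc hd hcd
    rw [lintegral_add_measure, lintegral_smul_measure, lintegral_smul_measure,
      ← hIA_def, ← hIB_def, hIAv, hIBv, smul_eq_mul, smul_eq_mul, ← ENNReal.ofReal_mul hc, ← ENNReal.ofReal_mul hd,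
      ← ENNReal.ofReal_add (by positivity) (by positivity)]
    calc ENNReal.ofReal (c * iA + d * iB) ≤ ENNReal.ofReal 1 := ENNReal.ofReal_le_ofReal hcd
      _ = 1 := ENNReal.ofReal_one
  have hRA0 : RA (Set.Iio 0) = 0 := by
    rw [hRA, Measure.restrict_apply measurableSet_Iio]
    exact measure_mono_null inter_subset_left hQpos
  have hRB0 : RB (Set.Iio 0) = 0 := by
    rw [hRB, Measure.restrict_apply measurableSet_Iio]
    exact measure_mono_null inter_subset_left hQpos
  have hpos : ∀ c d : ℝ≥0∞, (c • RA + d • RB) (Set.Iio 0) = 0 := by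
    intro c d
    rw [Measure.add_apply, Measure.smul_apply, Measure.smul_apply, smul_eq_mul, smul_eq_mul,
      hRA0, hRB0]
    simp
  have hP0 : IsProbabilityMeasure Q₀ :=
    ⟨huniv _ _ hnn0A hnn0B (by field_simp; linarith)⟩
  have hP1 : IsProbabilityMeasure Q₁ :=
    ⟨huniv _ _ hnn1A hnn1B (by field_simp; linarith)⟩
  have hcomb : Q = ENNReal.ofReal (1 - (1/2:ℝ)) • Q₀ + ENNReal.ofReal (1/2:ℝ) • Q₁ := by
    have h12 : ENNReal.ofReal (1 - (1/2:ℝ)) = ENNReal.ofReal (1/2:ℝ) := by norm_num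
    rw [h12, ← hsum, hQ₀, hQ₁]
    have key : ∀ u v : ℝ, 0 ≤ u → 0 ≤ v → u + v = 2 →
        ENNReal.ofReal (1/2:ℝ) * ENNReal.ofReal u + ENNReal.ofReal (1/2:ℝ) * ENNReal.ofReal v
          = 1 := by
      intro u v hu hv huv
      rw [← ENNReal.ofReal_mul (by norm_num), ← ENNReal.ofReal_mul (by norm_num),
        ← ENNReal.ofReal_add (by positivity) (by positivity)]
      rw [show 1/2 * u + 1/2 * v = 1 by linarith]
      exact ENNReal.ofReal_one
    calc RA + RB = (1:ℝ≥0∞) • RA + (1:ℝ≥0∞) • RB := by simp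
      _ = (ENNReal.ofReal (1/2:ℝ) * ENNReal.ofReal (1 + ε/a)
            + ENNReal.ofReal (1/2:ℝ) * ENNReal.ofReal (1 - ε/a)) • RA
          + (ENNReal.ofReal (1/2:ℝ) * ENNReal.ofReal (1 - ε/b)
            + ENNReal.ofReal (1/2:ℝ) * ENNReal.ofReal (1 + ε/b)) • RB := by
            rw [key _ _ hnn0A hnn1A (by ring), key _ _ hnn0B hnn1B (by ring)]
      _ = ENNReal.ofReal (1/2:ℝ) • (ENNReal.ofReal (1 + ε/a) • RA + ENNReal.ofReal (1 - ε/b) • RB)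
          + ENNReal.ofReal (1/2:ℝ) • (ENNReal.ofReal (1 - ε/a) • RA + ENNReal.ofReal (1 + ε/b) • RB) := by
            simp only [smul_add, smul_smul, add_smul]
            abel
  have heq := hext Q₀ Q₁ hP0 hP1 (hpos _ _) (hpos _ _)
    (hmean _ _ hnn0A hnn0B hm0) (hmean _ _ hnn1A hnn1B hm1)
    (1/2) (by norm_num) (by norm_num) hcomb
  have hRAA : RA A = ENNReal.ofReal a := by
    rw [hRA, Measure.restrict_apply hA, inter_self]; exact hQAv
  have hRBA : RB A = 0 := by
    rw [hRB, Measure.restrict_apply hA, inter_compl_self]; simp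
  have hQ₀A : Q₀ A = ENNReal.ofReal ((1 + ε/a) * a) := by
    rw [hQ₀, Measure.add_apply, Measure.smul_apply, Measure.smul_apply, smul_eq_mul, smul_eq_mul,
      hRAA, hRBA, mul_zero, add_zero, ← ENNReal.ofReal_mul hnn0A]
  have hQ₁A : Q₁ A = ENNReal.ofReal ((1 - ε/a) * a) := by
    rw [hQ₁, Measure.add_apply, Measure.smul_apply, Measure.smul_apply, smul_eq_mul, smul_eq_mul,
      hRAA, hRBA, mul_zero, add_zero, ← ENNReal.ofReal_mul hnn1A]
  have : (1 + ε/a) * a = (1 - ε/a) * a := by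
    have h' : Q₀ A = Q₁ A := by rw [heq]
    rw [hQ₀A, hQ₁A] at h'
    exact (ENNReal.ofReal_eq_ofReal_iff (by positivity) (by positivity)).mp h'
  have : ε = 0 := by
    field_simp at this
    linarith
  linarith


set_option maxHeartbeats 2000000 in
lemma threeSet (Q : Measure ℝ) [IsProbabilityMeasure Q] (hQpos : Q (Set.Iio 0) = 0)
    (hQmean : ∫⁻ x, ENNReal.ofReal x ∂Q ≤ 1)
    (hext : ∀ (Q₀ Q₁ : Measure ℝ), IsProbabilityMeasure Q₀ → IsProbabilityMeasure Q₁ →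
      Q₀ (Set.Iio 0) = 0 → Q₁ (Set.Iio 0) = 0 →
      (∫⁻ x, ENNReal.ofReal x ∂Q₀) ≤ 1 → (∫⁻ x, ENNReal.ofReal x ∂Q₁) ≤ 1 →
      ∀ α : ℝ, 0 < α → α < 1 →
        Q = ENNReal.ofReal (1 - α) • Q₀ + ENNReal.ofReal α • Q₁ → Q₀ = Q₁)
    (A B : Set ℝ) (hA : MeasurableSet A) (hB : MeasurableSet B) (hABd : Disjoint A B)
    (hQA : Q A ≠ 0) (hQB : Q B ≠ 0) : Q ((A ∪ B)ᶜ) = 0 := by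
  by_contra hQC
  set C := (A ∪ B)ᶜ with hC_def
  have hC : MeasurableSet C := (hA.union hB).compl
  set R1 := Q.restrict A with hR1
  set R2 := Q.restrict B with hR2
  set R3 := Q.restrict C with hR3
  have hsum : R1 + R2 + R3 = Q := by
    rw [hR1, hR2, hR3, ← Measure.restrict_union hABd hB]
    exact Measure.restrict_add_restrict_compl (hA.union hB)
  set a1 := (Q A).toReal with ha1_def
  set a2 := (Q B).toReal with ha2_def
  set a3 := (Q C).toReal with ha3_def
  have hQAne : Q A ≠ ⊤ := measure_ne_top Q A
  have hQBne : Q B ≠ ⊤ := measure_ne_top Q B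
  have hQCne : Q C ≠ ⊤ := measure_ne_top Q C
  have ha1 : 0 < a1 := ENNReal.toReal_pos hQA hQAne
  have ha2 : 0 < a2 := ENNReal.toReal_pos hQB hQBne
  have ha3 : 0 < a3 := ENNReal.toReal_pos hQC hQCne
  have hQAv : Q A = ENNReal.ofReal a1 := (ENNReal.ofReal_toReal hQAne).symm
  have hQBv : Q B = ENNReal.ofReal a2 := (ENNReal.ofReal_toReal hQBne).symm
  have hQCv : Q C = ENNReal.ofReal a3 := (ENNReal.ofReal_toReal hQCne).symm
  have ha123 : a1 + a2 + a3 = 1 := by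
    have h := measure_add_measure_compl (μ := Q) (hA.union hB)
    rw [measure_univ, measure_union hABd hB] at h
    have h2 := congrArg ENNReal.toReal h
    rw [ENNReal.toReal_add (by finiteness) hQCne, ENNReal.toReal_add hQAne hQBne] at h2
    simpa using h2
  set I1 := ∫⁻ x, ENNReal.ofReal x ∂ R1 with hI1_def
  set I2 := ∫⁻ x, ENNReal.ofReal x ∂ R2 with hI2_def
  set I3 := ∫⁻ x, ENNReal.ofReal x ∂ R3 with hI3_def
  have hIsum : I1 + I2 + I3 = ∫⁻ x, ENNReal.ofReal x ∂Q := by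
    rw [← hsum, lintegral_add_measure, lintegral_add_measure]
  have hIle : I1 + I2 + I3 ≤ 1 := hIsum ▸ hQmean
  have hI1ne : I1 ≠ ⊤ := fun h => by simp [h] at hIle
  have hI2ne : I2 ≠ ⊤ := fun h => by simp [h] at hIle
  have hI3ne : I3 ≠ ⊤ := fun h => by simp [h] at hIle
  set i1 := I1.toReal with hi1_def
  set i2 := I2.toReal with hi2_def
  set i3 := I3.toReal with hi3_def
  have hi10 : 0 ≤ i1 := ENNReal.toReal_nonneg
  have hi20 : 0 ≤ i2 := ENNReal.toReal_nonneg
  have hi30 : 0 ≤ i3 := ENNReal.toReal_nonneg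
  have hI1v : I1 = ENNReal.ofReal i1 := (ENNReal.ofReal_toReal hI1ne).symm
  have hI2v : I2 = ENNReal.ofReal i2 := (ENNReal.ofReal_toReal hI2ne).symm
  have hI3v : I3 = ENNReal.ofReal i3 := (ENNReal.ofReal_toReal hI3ne).symm
  have hisum : i1 + i2 + i3 ≤ 1 := by
    have h1 := ENNReal.toReal_mono (by simp) hIle
    rw [ENNReal.toReal_add (by finiteness) hI3ne, ENNReal.toReal_add hI1ne hI2ne] at h1
    simpa using h1
  obtain ⟨d1, d2, d3, hdA, hdI, hdnz⟩ :
      ∃ d1 d2 d3 : ℝ, d1 * a1 + d2 * a2 + d3 * a3 = 0 ∧ d1 * i1 + d2 * i2 + d3 * i3 = 0 ∧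
        (d1 ≠ 0 ∨ d2 ≠ 0 ∨ d3 ≠ 0) := by
    by_cases hpar : a1 * i2 - a2 * i1 = 0
    · exact ⟨a2, -a1, 0, by ring, by linarith [hpar], Or.inl ha2.ne'⟩
    · exact ⟨a2 * i3 - a3 * i2, a3 * i1 - a1 * i3, a1 * i2 - a2 * i1, by ring, by ring,
        Or.inr (Or.inr hpar)⟩
  set ε := (1 + |d1| + |d2| + |d3|)⁻¹ with hε_def
  have hε : 0 < ε := by positivity
  have habs : ε * (1 + |d1| + |d2| + |d3|) = 1 := inv_mul_cancel₀ (by positivity)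
  have hbound : ∀ d : ℝ, |d| ≤ |d1| + |d2| + |d3| → 0 ≤ 1 + ε * d ∧ 0 ≤ 1 - ε * d := by
    intro d hd
    have h1 : ε * |d| < 1 := by nlinarith [abs_nonneg d1, abs_nonneg d2, abs_nonneg d3]
    have h2 : -|d| ≤ d := neg_abs_le d
    have h3 : d ≤ |d| := le_abs_self d
    constructor <;> nlinarith
  have habs1 : |d1| ≤ |d1| + |d2| + |d3| := by linarith [abs_nonneg d2, abs_nonneg d3]
  have habs2 : |d2| ≤ |d1| + |d2| + |d3| := by linarith [abs_nonneg d1, abs_nonneg d3]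
  have habs3 : |d3| ≤ |d1| + |d2| + |d3| := by linarith [abs_nonneg d1, abs_nonneg d2]
  obtain ⟨hp1, hn1⟩ := hbound d1 habs1
  obtain ⟨hp2, hn2⟩ := hbound d2 habs2
  obtain ⟨hp3, hn3⟩ := hbound d3 habs3
  set Q₀ : Measure ℝ := ENNReal.ofReal (1 + ε*d1) • R1 + ENNReal.ofReal (1 + ε*d2) • R2
      + ENNReal.ofReal (1 + ε*d3) • R3 with hQ₀
  set Q₁ : Measure ℝ := ENNReal.ofReal (1 - ε*d1) • R1 + ENNReal.ofReal (1 - ε*d2) • R2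
      + ENNReal.ofReal (1 - ε*d3) • R3 with hQ₁
  have hR1univ : R1 univ = ENNReal.ofReal a1 := by
    rw [hR1, Measure.restrict_apply_univ]; exact hQAv
  have hR2univ : R2 univ = ENNReal.ofReal a2 := by
    rw [hR2, Measure.restrict_apply_univ]; exact hQBv
  have hR3univ : R3 univ = ENNReal.ofReal a3 := by
    rw [hR3, Measure.restrict_apply_univ]; exact hQCv
  have happly : ∀ (c1 c2 c3 : ℝ≥0∞) (s : Set ℝ),
      (c1 • R1 + c2 • R2 + c3 • R3) s = c1 * R1 s + c2 * R2 s + c3 * R3 s := by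
    intro c1 c2 c3 s
    simp [Measure.add_apply, Measure.smul_apply, smul_eq_mul]
  have huniv : ∀ c1 c2 c3 : ℝ, 0 ≤ c1 → 0 ≤ c2 → 0 ≤ c3 → c1*a1 + c2*a2 + c3*a3 = 1 →
      (ENNReal.ofReal c1 • R1 + ENNReal.ofReal c2 • R2 + ENNReal.ofReal c3 • R3) univ = 1 := by
    intro c1 c2 c3 h1 h2 h3 hc
    rw [happly, hR1univ, hR2univ, hR3univ,
      ← ENNReal.ofReal_mul h1, ← ENNReal.ofReal_mul h2, ← ENNReal.ofReal_mul h3,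
      ← ENNReal.ofReal_add (by positivity) (by positivity),
      ← ENNReal.ofReal_add (by positivity) (by positivity), hc, ENNReal.ofReal_one]
  have hmean : ∀ c1 c2 c3 : ℝ, 0 ≤ c1 → 0 ≤ c2 → 0 ≤ c3 → c1*i1 + c2*i2 + c3*i3 ≤ 1 →
      (∫⁻ x, ENNReal.ofReal x
        ∂(ENNReal.ofReal c1 • R1 + ENNReal.ofReal c2 • R2 + ENNReal.ofReal c3 • R3)) ≤ 1 := by
    intro c1 c2 c3 h1 h2 h3 hc
    rw [lintegral_add_measure, lintegral_add_measure, lintegral_smul_measure,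
      lintegral_smul_measure, lintegral_smul_measure,
      ← hI1_def, ← hI2_def, ← hI3_def, hI1v, hI2v, hI3v, smul_eq_mul, smul_eq_mul, smul_eq_mul,
      ← ENNReal.ofReal_mul h1, ← ENNReal.ofReal_mul h2, ← ENNReal.ofReal_mul h3,
      ← ENNReal.ofReal_add (by positivity) (by positivity),
      ← ENNReal.ofReal_add (by positivity) (by positivity)]
    exact le_trans (ENNReal.ofReal_le_ofReal hc) (by simp)
  have hposR : ∀ (c1 c2 c3 : ℝ≥0∞), (c1 • R1 + c2 • R2 + c3 • R3) (Set.Iio 0) = 0 := by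
    intro c1 c2 c3
    have p1 : R1 (Set.Iio 0) = 0 := by
      rw [hR1, Measure.restrict_apply measurableSet_Iio]
      exact measure_mono_null inter_subset_left hQpos
    have p2 : R2 (Set.Iio 0) = 0 := by
      rw [hR2, Measure.restrict_apply measurableSet_Iio]
      exact measure_mono_null inter_subset_left hQpos
    have p3 : R3 (Set.Iio 0) = 0 := by
      rw [hR3, Measure.restrict_apply measurableSet_Iio]
      exact measure_mono_null inter_subset_left hQpos
    rw [happly, p1, p2, p3]; simp
  have hP0 : IsProbabilityMeasure Q₀ :=
    ⟨huniv _ _ _ hp1 hp2 hp3 (by linear_combination ha123 + ε * hdA)⟩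
  have hP1 : IsProbabilityMeasure Q₁ :=
    ⟨huniv _ _ _ hn1 hn2 hn3 (by linear_combination ha123 - ε * hdA)⟩
  have hmean0 : (∫⁻ x, ENNReal.ofReal x ∂Q₀) ≤ 1 := by
    refine hmean _ _ _ hp1 hp2 hp3 ?_
    have e : (1 + ε*d1)*i1 + (1 + ε*d2)*i2 + (1 + ε*d3)*i3 = i1 + i2 + i3 := by
      linear_combination ε * hdI
    linarith
  have hmean1 : (∫⁻ x, ENNReal.ofReal x ∂Q₁) ≤ 1 := by
    refine hmean _ _ _ hn1 hn2 hn3 ?_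
    have e : (1 - ε*d1)*i1 + (1 - ε*d2)*i2 + (1 - ε*d3)*i3 = i1 + i2 + i3 := by
      linear_combination -ε * hdI
    linarith
  have hcomb : Q = ENNReal.ofReal (1 - (1/2:ℝ)) • Q₀ + ENNReal.ofReal (1/2:ℝ) • Q₁ := by
    have h12 : ENNReal.ofReal (1 - (1/2:ℝ)) = ENNReal.ofReal (1/2:ℝ) := by norm_num
    rw [h12, ← hsum, hQ₀, hQ₁]
    have key : ∀ u v : ℝ, 0 ≤ u → 0 ≤ v → u + v = 2 →
        ENNReal.ofReal (1/2:ℝ) * ENNReal.ofReal u + ENNReal.ofReal (1/2:ℝ) * ENNReal.ofReal v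
          = 1 := by
      intro u v hu hv huv
      rw [← ENNReal.ofReal_mul (by norm_num), ← ENNReal.ofReal_mul (by norm_num),
        ← ENNReal.ofReal_add (by positivity) (by positivity)]
      rw [show 1/2 * u + 1/2 * v = 1 by linarith]
      exact ENNReal.ofReal_one
    calc R1 + R2 + R3 = (1:ℝ≥0∞) • R1 + (1:ℝ≥0∞) • R2 + (1:ℝ≥0∞) • R3 := by simp
      _ = (ENNReal.ofReal (1/2:ℝ) * ENNReal.ofReal (1 + ε*d1)
            + ENNReal.ofReal (1/2:ℝ) * ENNReal.ofReal (1 - ε*d1)) • R1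
          + (ENNReal.ofReal (1/2:ℝ) * ENNReal.ofReal (1 + ε*d2)
            + ENNReal.ofReal (1/2:ℝ) * ENNReal.ofReal (1 - ε*d2)) • R2
          + (ENNReal.ofReal (1/2:ℝ) * ENNReal.ofReal (1 + ε*d3)
            + ENNReal.ofReal (1/2:ℝ) * ENNReal.ofReal (1 - ε*d3)) • R3 := by
            rw [key _ _ hp1 hn1 (by ring), key _ _ hp2 hn2 (by ring), key _ _ hp3 hn3 (by ring)]
      _ = ENNReal.ofReal (1/2:ℝ) • (ENNReal.ofReal (1 + ε*d1) • R1
            + ENNReal.ofReal (1 + ε*d2) • R2 + ENNReal.ofReal (1 + ε*d3) • R3)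
          + ENNReal.ofReal (1/2:ℝ) • (ENNReal.ofReal (1 - ε*d1) • R1
            + ENNReal.ofReal (1 - ε*d2) • R2 + ENNReal.ofReal (1 - ε*d3) • R3) := by
            simp only [smul_add, smul_smul, add_smul]
            abel
  have heq := hext Q₀ Q₁ hP0 hP1 (hposR _ _ _) (hposR _ _ _) hmean0 hmean1
    (1/2) (by norm_num) (by norm_num) hcomb
  -- evaluate at A
  have hR1A : R1 A = ENNReal.ofReal a1 := by
    rw [hR1, Measure.restrict_apply hA, inter_self]; exact hQAv
  have hR2A : R2 A = 0 := by
    rw [hR2, Measure.restrict_apply hA]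
    rw [(disjoint_iff_inter_eq_empty.mp hABd)]
    simp
  have hR3A : R3 A = 0 := by
    rw [hR3, Measure.restrict_apply hA]
    have : A ∩ C = ∅ := by
      rw [hC_def]
      ext y; simp; tauto
    rw [this]; simp
  have hd1 : d1 = 0 := by
    have h0 : Q₀ A = ENNReal.ofReal ((1 + ε*d1) * a1) := by
      rw [hQ₀, happly, hR1A, hR2A, hR3A, mul_zero, mul_zero, add_zero, add_zero,
        ← ENNReal.ofReal_mul hp1]
    have h1 : Q₁ A = ENNReal.ofReal ((1 - ε*d1) * a1) := by
      rw [hQ₁, happly, hR1A, hR2A, hR3A, mul_zero, mul_zero, add_zero, add_zero,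
        ← ENNReal.ofReal_mul hn1]
    have h2 : Q₀ A = Q₁ A := by rw [heq]
    rw [h0, h1] at h2
    have h3 := (ENNReal.ofReal_eq_ofReal_iff (by positivity) (by positivity)).mp h2
    have h4 : ε * d1 * a1 = 0 := by linarith
    rcases mul_eq_zero.mp h4 with h | h
    · rcases mul_eq_zero.mp h with h' | h'
      · exact absurd h' hε.ne'
      · exact h'
    · exact absurd h ha1.ne'
  -- evaluate at B
  have hR1B : R1 B = 0 := by
    rw [hR1, Measure.restrict_apply hB]
    rw [(disjoint_iff_inter_eq_empty.mp hABd.symm)]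
    simp
  have hR2B : R2 B = ENNReal.ofReal a2 := by
    rw [hR2, Measure.restrict_apply hB, inter_self]; exact hQBv
  have hR3B : R3 B = 0 := by
    rw [hR3, Measure.restrict_apply hB]
    have : B ∩ C = ∅ := by
      rw [hC_def]
      ext y; simp; tauto
    rw [this]; simp
  have hd2 : d2 = 0 := by
    have h0 : Q₀ B = ENNReal.ofReal ((1 + ε*d2) * a2) := by
      rw [hQ₀, happly, hR1B, hR2B, hR3B, mul_zero, mul_zero, zero_add, add_zero,
        ← ENNReal.ofReal_mul hp2]
    have h1 : Q₁ B = ENNReal.ofReal ((1 - ε*d2) * a2) := by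
      rw [hQ₁, happly, hR1B, hR2B, hR3B, mul_zero, mul_zero, zero_add, add_zero,
        ← ENNReal.ofReal_mul hn2]
    have h2 : Q₀ B = Q₁ B := by rw [heq]
    rw [h0, h1] at h2
    have h3 := (ENNReal.ofReal_eq_ofReal_iff (by positivity) (by positivity)).mp h2
    have h4 : ε * d2 * a2 = 0 := by linarith
    rcases mul_eq_zero.mp h4 with h | h
    · rcases mul_eq_zero.mp h with h' | h'
      · exact absurd h' hε.ne'
      · exact h'
    · exact absurd h ha2.ne'
  have hd3 : d3 = 0 := by
    rw [hd1, hd2] at hdA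
    simp at hdA
    rcases hdA with h | h
    · exact h
    · exact absurd h ha3.ne'
  rcases hdnz with h | h | h
  · exact h hd1
  · exact h hd2
  · exact h hd3


/-- An extreme point of the convex set `C` of Borel probability measures on `[0,∞)` with mean
at most `1` is either a Dirac measure `δ_x` with `x ∈ [0,1]`, or is supported on two distinct
points and has mean exactly `1`. -/
theorem extreme_point_of_mean_le_one (Q : Measure ℝ) [IsProbabilityMeasure Q]
    (hQpos : Q (Set.Iio 0) = 0)
    (hQmean : ∫⁻ x, ENNReal.ofReal x ∂Q ≤ 1)
    (hext : ∀ (Q₀ Q₁ : Measure ℝ), IsProbabilityMeasure Q₀ → IsProbabilityMeasure Q₁ →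
      Q₀ (Set.Iio 0) = 0 → Q₁ (Set.Iio 0) = 0 →
      (∫⁻ x, ENNReal.ofReal x ∂Q₀) ≤ 1 → (∫⁻ x, ENNReal.ofReal x ∂Q₁) ≤ 1 →
      ∀ α : ℝ, 0 < α → α < 1 →
        Q = ENNReal.ofReal (1 - α) • Q₀ + ENNReal.ofReal α • Q₁ → Q₀ = Q₁) :
    (∃ x : ℝ, 0 ≤ x ∧ x ≤ 1 ∧ Q = Measure.dirac x) ∨
    (∃ a b : ℝ, 0 ≤ a ∧ 0 ≤ b ∧ a ≠ b ∧ Q ({a, b} : Set ℝ) = 1 ∧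
      ∫⁻ x, ENNReal.ofReal x ∂Q = 1) := by
  have diracCase : (∀ s : Set ℝ, MeasurableSet s → Q s = 0 ∨ Q s = 1) →
      (∃ x : ℝ, 0 ≤ x ∧ x ≤ 1 ∧ Q = Measure.dirac x) := by
    intro h01
    obtain ⟨x, hx⟩ := zeroOne_dirac Q h01
    refine ⟨x, ?_, ?_, hx⟩
    · by_contra hneg
      push_neg at hneg
      have h0 : Q {x} = 0 := measure_mono_null
        (by intro y hy; rw [mem_singleton_iff] at hy; subst hy; exact hneg) hQpos
      rw [hx, Measure.dirac_apply' _ (measurableSet_singleton x)] at h0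
      simp at h0
    · have hint : ∫⁻ y, ENNReal.ofReal y ∂Q = ENNReal.ofReal x := by
        rw [hx]
        exact lintegral_dirac' x ENNReal.measurable_ofReal
      rw [hint] at hQmean
      exact ENNReal.ofReal_le_one.mp hQmean
  rcases lt_or_eq_of_le hQmean with hlt | heqm
  · exact Or.inl (diracCase (fun s hs => twoSet Q hQpos hlt hext s hs))
  · have no3 := threeSet Q hQpos hQmean hext
    by_cases hsplit : ∃ A : Set ℝ, MeasurableSet A ∧ Q A ≠ 0 ∧ Q A ≠ 1
    · obtain ⟨A, hA, hA0, hA1⟩ := hsplit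
      right
      have hQAc0 : Q Aᶜ ≠ 0 := by
        rw [prob_compl_eq_one_sub hA]
        intro hz
        exact hA1 (le_antisymm prob_le_one (tsub_eq_zero_iff_le.mp hz))
      have part01 : ∀ T : Set ℝ, MeasurableSet T → Q Tᶜ ≠ 0 →
          ∀ s : Set ℝ, MeasurableSet s → Q (T ∩ s) = 0 ∨ Q (T ∩ s) = Q T := by
        intro T hT hTc0 s hs
        by_contra hcon
        push_neg at hcon
        obtain ⟨c0, c1⟩ := hcon
        have hAs : Q (T ∩ sᶜ) ≠ 0 := by
          intro hz
          have hcover : Q T ≤ Q (T ∩ s) + Q (T ∩ sᶜ) := by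
            calc Q T = Q ((T ∩ s) ∪ (T ∩ sᶜ)) := by rw [Set.inter_union_compl]
              _ ≤ Q (T ∩ s) + Q (T ∩ sᶜ) := measure_union_le _ _
          rw [hz, add_zero] at hcover
          exact c1 (le_antisymm (measure_mono inter_subset_left) hcover)
        have h3 := no3 (T ∩ s) (T ∩ sᶜ) (hT.inter hs) (hT.inter hs.compl)
          (disjoint_compl_right.mono inter_subset_right inter_subset_right) c0 hAs
        rw [Set.inter_union_compl] at h3
        exact hTc0 h3
      have extract : ∀ T : Set ℝ, MeasurableSet T → Q T ≠ 0 →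
          (∀ s : Set ℝ, MeasurableSet s → Q (T ∩ s) = 0 ∨ Q (T ∩ s) = Q T) →
          ∃ p : ℝ, Q ({p} ∩ T) = Q T := by
        intro T hT hT0 h01T
        set PT : Measure ℝ := (Q T)⁻¹ • Q.restrict T with hPT
        haveI : IsProbabilityMeasure PT := ⟨by
          rw [hPT, Measure.smul_apply, Measure.restrict_apply_univ, smul_eq_mul]
          exact ENNReal.inv_mul_cancel hT0 (measure_ne_top Q T)⟩
        have h01 : ∀ s : Set ℝ, MeasurableSet s → PT s = 0 ∨ PT s = 1 := by
          intro s hs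
          rw [hPT, Measure.smul_apply, Measure.restrict_apply hs, smul_eq_mul, Set.inter_comm]
          rcases h01T s hs with h | h
          · left; rw [h, mul_zero]
          · right; rw [h]; exact ENNReal.inv_mul_cancel hT0 (measure_ne_top Q T)
        obtain ⟨p, hp⟩ := zeroOne_dirac PT h01
        refine ⟨p, ?_⟩
        have h1 : PT {p} = 1 := by rw [hp]; exact Measure.dirac_apply_of_mem (mem_singleton p)
        rw [hPT, Measure.smul_apply, Measure.restrict_apply (measurableSet_singleton p),
          smul_eq_mul] at h1
        calc Q ({p} ∩ T) = (Q T * (Q T)⁻¹) * Q ({p} ∩ T) := by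
              rw [ENNReal.mul_inv_cancel hT0 (measure_ne_top Q T), one_mul]
          _ = Q T * ((Q T)⁻¹ * Q ({p} ∩ T)) := by rw [mul_assoc]
          _ = Q T := by rw [h1, mul_one]
      obtain ⟨aPt, hkeyA⟩ := extract A hA hA0 (part01 A hA hQAc0)
      obtain ⟨bPt, hkeyB⟩ := extract Aᶜ hA.compl hQAc0
        (part01 Aᶜ hA.compl (by rwa [compl_compl]))
      have hQa0 : Q {aPt} ≠ 0 := by
        intro hz
        have h' : Q ({aPt} ∩ A) = 0 := measure_mono_null inter_subset_left hz
        rw [hkeyA] at h'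
        exact hA0 h'
      have hQb0 : Q {bPt} ≠ 0 := by
        intro hz
        have h' : Q ({bPt} ∩ Aᶜ) = 0 := measure_mono_null inter_subset_left hz
        rw [hkeyB] at h'
        exact hQAc0 h'
      have hanneg : 0 ≤ aPt := by
        by_contra hneg
        push_neg at hneg
        exact hQa0 (measure_mono_null
          (by intro y hy; rw [mem_singleton_iff] at hy; subst hy; exact hneg) hQpos)
      have hbnneg : 0 ≤ bPt := by
        by_contra hneg
        push_neg at hneg
        exact hQb0 (measure_mono_null
          (by intro y hy; rw [mem_singleton_iff] at hy; subst hy; exact hneg) hQpos)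
      have hQsum : Q A + Q Aᶜ = 1 := by
        rw [measure_add_measure_compl hA, measure_univ]
      have hne : aPt ≠ bPt := by
        intro hab
        subst hab
        have e := measure_inter_add_diff (μ := Q) ({aPt} : Set ℝ) hA
        rw [hkeyA, diff_eq, hkeyB, hQsum] at e
        by_cases haA : aPt ∈ A
        · have h' : ({aPt} : Set ℝ) ∩ A = {aPt} :=
            inter_eq_self_of_subset_left (singleton_subset_iff.mpr haA)
          rw [h'] at hkeyA
          rw [← e] at hkeyA
          exact hA1 hkeyA.symm
        · have h' : ({aPt} : Set ℝ) ∩ A = ∅ := by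
            ext y; simp only [mem_inter_iff, mem_singleton_iff, mem_empty_iff_false, iff_false]
            rintro ⟨rfl, hy⟩; exact haA hy
          rw [h'] at hkeyA
          simp at hkeyA
          exact hA0 hkeyA.symm
      refine ⟨aPt, bPt, hanneg, hbnneg, hne, ?_, heqm⟩
      have hge : (1:ℝ≥0∞) ≤ Q {aPt, bPt} := by
        have e := measure_inter_add_diff (μ := Q) ({aPt, bPt} : Set ℝ) hA
        have g1 : Q A ≤ Q ({aPt, bPt} ∩ A) := by
          rw [← hkeyA]
          exact measure_mono (inter_subset_inter_left _ (by simp))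
        have g2 : Q Aᶜ ≤ Q ({aPt, bPt} \ A) := by
          rw [← hkeyB]
          refine measure_mono ?_
          rw [diff_eq]
          exact inter_subset_inter_left _ (by simp)
        calc (1:ℝ≥0∞) = Q A + Q Aᶜ := hQsum.symm
          _ ≤ Q ({aPt, bPt} ∩ A) + Q ({aPt, bPt} \ A) := add_le_add g1 g2
          _ = Q {aPt, bPt} := e
      exact le_antisymm prob_le_one hge
    · push_neg at hsplit
      refine Or.inl (diracCase ?_)
      intro s hs
      by_cases h : Q s = 0
      · exact Or.inl h
      · exact Or.inr (hsplit s hs h)
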